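/- Let s ≥ 1, let Q be a monic hyperbolic real polynomial, let c₀ ∈ ℝ with Q(c₀) ≠ 0, and set P := (X − c₀)^s·Q, a hyperbolic polynomial. Let ξ₀ ∈ ℝ with ξ₀ ≠ c₀ be a simple root of P', i.e. P'(ξ₀) = 0 and P''(ξ₀) ≠ 0. Suppose f : ℝ → ℝ is differentiable at c₀, f(c₀) = ξ₀, and for all c in some neighborhood of c₀ the polynomial ((X − c)^s·Q)' vanishes at f(c). Then f'(c₀) = −s·P(ξ₀)/((ξ₀ − c₀)²·P''(ξ₀)); moreover f'(c₀) ≥ 0, and f'(c₀) = 0 if and only if P(ξ₀) = 0. -/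

import Mathlib

open Polynomial

private lemma aux_prod_ineq (M : Multiset ℝ) (x : ℝ) :
    Polynomial.eval x ((M.map (fun r => X - C r)).prod) *
      Polynomial.eval x (derivative (derivative ((M.map (fun r => X - C r)).prod))) ≤
    (Polynomial.eval x (derivative ((M.map (fun r => X - C r)).prod)))^2 := by
  induction M using Multiset.induction with
  | empty => simp
  | cons r M ih =>
      rw [Multiset.map_cons, Multiset.prod_cons]
      simp only [derivative_mul, derivative_add, derivative_sub, derivative_X, derivative_C,
        sub_zero, one_mul, eval_add, eval_mul, eval_sub, eval_X, eval_C, eval_one]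
      nlinarith [mul_le_mul_of_nonneg_left ih (sq_nonneg (x - r)),
        sq_nonneg (Polynomial.eval x ((M.map (fun r => X - C r)).prod))]

private lemma aux_second_deriv (k : ℕ) (c₀ ξ₀ : ℝ) (Q : Polynomial ℝ) :
    (ξ₀-c₀)^2 * (derivative (derivative ((X - C c₀)^(k+1)*Q))).eval ξ₀ =
    ((k:ℝ)+1)*(k:ℝ)*((ξ₀-c₀)^(k+1))*Q.eval ξ₀
      + 2*((k:ℝ)+1)*(ξ₀-c₀)^(k+2)*(derivative Q).eval ξ₀
      + (ξ₀-c₀)^(k+3)*(derivative (derivative Q)).eval ξ₀ := by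
  cases k with
  | zero => simp [derivative_mul, derivative_pow]; ring
  | succ m =>
      simp [derivative_mul, derivative_pow]
      ring

/-- Let `Q` be a monic hyperbolic real polynomial, `s ≥ 1`, `c₀` not a root of `Q`,
and `P := (X - c₀)^s * Q` (a hyperbolic polynomial). Let `ξ₀ ≠ c₀` be a simple root
of `P'` (`P'(ξ₀) = 0`, `P''(ξ₀) ≠ 0`). If `f` is differentiable at `c₀`,
`f c₀ = ξ₀`, and `f` tracks a root of the derivative of `(X - c)^s * Q` as `c`
varies near `c₀`, then `f'(c₀) = -s·P(ξ₀)/((ξ₀ - c₀)² P''(ξ₀))`; moreover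
`f'(c₀) ≥ 0`, with `f'(c₀) = 0` if and only if `P(ξ₀) = 0`. -/
theorem deriv_of_root_of_derivative_wrt_multiple_root
    (s : ℕ) (hs : 1 ≤ s) (Q : Polynomial ℝ)
    (hQmonic : Q.Monic) (hQroots : Q.roots.card = Q.natDegree)
    (hQsplit : (Q.map (RingHom.id ℝ)).Splits)
    (c₀ : ℝ) (hc₀ : Q.eval c₀ ≠ 0)
    (P : Polynomial ℝ) (hPdef : P = (X - C c₀) ^ s * Q)
    (ξ₀ : ℝ) (hξc : ξ₀ ≠ c₀)
    (hξ₀ : (Polynomial.derivative P).eval ξ₀ = 0)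
    (hsimple : (Polynomial.derivative (Polynomial.derivative P)).eval ξ₀ ≠ 0)
    (f : ℝ → ℝ) (hf : DifferentiableAt ℝ f c₀) (hfc₀ : f c₀ = ξ₀)
    (hftrack : ∀ᶠ c in nhds c₀,
      (Polynomial.derivative ((X - C c) ^ s * Q)).eval (f c) = 0) :
    deriv f c₀ = -(s : ℝ) * P.eval ξ₀ /
      ((ξ₀ - c₀) ^ 2 * (Polynomial.derivative (Polynomial.derivative P)).eval ξ₀) ∧
    0 ≤ deriv f c₀ ∧
    (deriv f c₀ = 0 ↔ P.eval ξ₀ = 0) := by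
  obtain ⟨k, rfl⟩ : ∃ k, s = k + 1 := ⟨s - 1, by omega⟩
  have ha : ξ₀ - c₀ ≠ 0 := sub_ne_zero.mpr hξc
  set a : ℝ := ξ₀ - c₀ with ha_def
  set d : ℝ := deriv f c₀ with hd_def
  set q : ℝ := Q.eval ξ₀ with hq_def
  set q1 : ℝ := (derivative Q).eval ξ₀ with hq1_def
  set q2 : ℝ := (derivative (derivative Q)).eval ξ₀ with hq2_def
  set p2 : ℝ := (derivative (derivative P)).eval ξ₀ with hp2_def
  -- derivative formula
  have hder : ∀ c : ℝ, derivative ((X - C c)^(k+1) * Q)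
      = C ((k:ℝ)+1) * (X - C c)^k * Q + (X - C c)^(k+1) * derivative Q := by
    intro c
    rw [derivative_mul, derivative_pow]
    simp
  -- first key equation
  have hE1 : ((k:ℝ)+1) * a^k * q + a^(k+1) * q1 = 0 := by
    have h := hξ₀
    rw [hPdef, hder c₀] at h
    simpa [hq_def, hq1_def, ha_def] using h
  -- second derivative relation
  have hP2 : a^2 * p2 = ((k:ℝ)+1)*(k:ℝ)*(a^(k+1))*q + 2*((k:ℝ)+1)*a^(k+2)*q1 + a^(k+3)*q2 := by
    rw [hp2_def, hPdef]
    exact aux_second_deriv k c₀ ξ₀ Q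
  -- the auxiliary function g and its vanishing
  set g : ℝ → ℝ := fun c => ((k:ℝ)+1) * (f c - c)^(k+1) * Q.eval (f c)
      + (f c - c)^(k+2) * (derivative Q).eval (f c) with hg_def
  have hg0 : g =ᶠ[nhds c₀] fun _ => (0:ℝ) := by
    filter_upwards [hftrack] with c hc
    have h1 : (derivative ((X - C c)^(k+1) * Q)).eval (f c)
        = ((k:ℝ)+1)*(f c - c)^k * Q.eval (f c) + (f c - c)^(k+1) * (derivative Q).eval (f c) := by
      rw [hder c]
      simp
    have h2 : g c = (f c - c) * ((derivative ((X - C c)^(k+1) * Q)).eval (f c)) := by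
      rw [h1, hg_def]
      simp only []
      ring
    rw [h2, hc, mul_zero]
  -- derivative of g
  have hfd : HasDerivAt f d c₀ := hf.hasDerivAt
  have hu : HasDerivAt (fun c => f c - c) (d - 1) c₀ := hfd.sub (hasDerivAt_id c₀)
  have hu0 : f c₀ - c₀ = a := by rw [hfc₀]
  have hQc : HasDerivAt (fun c => Q.eval (f c)) (q1 * d) c₀ := by
    have := (Q.hasDerivAt (f c₀)).comp c₀ hfd
    rwa [hfc₀] at this
  have hQ'c : HasDerivAt (fun c => (derivative Q).eval (f c)) (q2 * d) c₀ := by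
    have := ((derivative Q).hasDerivAt (f c₀)).comp c₀ hfd
    rwa [hfc₀] at this
  have hp1 : HasDerivAt (fun c => (f c - c)^(k+1)) (((k:ℝ)+1) * a^k * (d - 1)) c₀ := by
    have := hu.fun_pow (k+1)
    simpa [hu0] using this
  have hpp2 : HasDerivAt (fun c => (f c - c)^(k+2)) (((k:ℝ)+2) * a^(k+1) * (d - 1)) c₀ := by
    have := hu.fun_pow (k+2)
    norm_num at this
    simpa [hu0] using this
  have hg : HasDerivAt g
      (((k:ℝ)+1) * ((((k:ℝ)+1) * a^k * (d - 1)) * q + a^(k+1) * (q1 * d))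
        + ((((k:ℝ)+2) * a^(k+1) * (d - 1)) * q1 + a^(k+2) * (q2 * d))) c₀ := by
    have h1 := (hp1.mul hQc).const_mul ((k:ℝ)+1)
    have h2 := hpp2.fun_mul hQ'c
    have h3 := h1.fun_add h2
    simp only [hu0, hfc₀] at h3
    simpa [hg_def, mul_assoc] using h3
  have hD : ((k:ℝ)+1) * ((((k:ℝ)+1) * a^k * (d - 1)) * q + a^(k+1) * (q1 * d))
        + ((((k:ℝ)+2) * a^(k+1) * (d - 1)) * q1 + a^(k+2) * (q2 * d)) = 0 := by
    rw [← hg.deriv, Filter.EventuallyEq.deriv_eq hg0]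
    simp
  -- value of P at ξ₀
  have hPv : P.eval ξ₀ = a^(k+1) * q := by
    rw [hPdef]
    simp [ha_def, hq_def]
  have hden : a^2 * p2 ≠ 0 := mul_ne_zero (pow_ne_zero _ ha) hsimple
  -- the formula for the derivative
  have hform : d = -((k:ℝ)+1) * P.eval ξ₀ / (a^2 * p2) := by
    rw [hPv, eq_div_iff hden, hP2]
    have e1 : a^(k+1) = a^k * a := pow_succ a k
    have e2 : a^(k+2) = a^k * a^2 := by rw [pow_add]
    have e3 : a^(k+3) = a^k * a^3 := by rw [pow_add]
    simp only [e1, e2, e3] at hE1 hD ⊢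
    linear_combination a * hD + (((k:ℝ)+2) * a - a * d) * hE1
  -- P is hyperbolic: key sign inequality
  have hPmonic : P.Monic := by
    rw [hPdef]
    exact ((monic_X_sub_C c₀).pow (k+1)).mul hQmonic
  have hPsplits : P.Splits := by
    rw [hPdef]
    exact ((Splits.X_sub_C _).pow _).mul (by simpa using hQsplit)
  have hPeq : P = (P.roots.map (fun r => X - C r)).prod :=
    hPsplits.eq_prod_roots_of_monic hPmonic
  have hkey : P.eval ξ₀ * p2 ≤ 0 := by
    have h := aux_prod_ineq P.roots ξ₀
    rw [← hPeq] at h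
    rw [hξ₀] at h
    simpa [hp2_def] using h
  refine ⟨by push_cast; exact hform, ?_, ?_⟩
  · rw [hform]
    have : -((k:ℝ)+1) * P.eval ξ₀ / (a^2 * p2)
        = (-((k:ℝ)+1) * (P.eval ξ₀ * p2)) / (a^2 * p2^2) := by
      field_simp
    rw [this]
    apply div_nonneg
    · nlinarith
    · positivity
  · have hk1 : -((k:ℝ)+1) ≠ 0 := neg_ne_zero.mpr (by positivity)
    rw [hform, _root_.div_eq_zero_iff, mul_eq_zero]
    constructor
    · rintro ((h | h) | h)
      · exact absurd h hk1
      · exact h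
      · exact absurd h hden
    · intro h
      exact Or.inl (Or.inr h)
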